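/- For every real λ > 0 and every nonnegative integer n, Erlang's loss function is strictly decreasing in n: B(n+1, λ) < B(n, λ), where B(n, λ) = (λ^n/n!)/s_n(λ). -/

import Mathlib

/-- The `n`-th partial sum of the Taylor series of the exponential function. -/
noncomputable def s (n : ℕ) (a : ℝ) : ℝ :=
  ∑ j ∈ Finset.range (n + 1), a ^ j / (Nat.factorial j : ℝ)

/-- Erlang's loss function. -/
noncomputable def erlangB (n : ℕ) (a : ℝ) : ℝ := (a ^ n / (Nat.factorial n : ℝ)) / s n a

theorem stmt_11 (a : ℝ) (ha : 0 < a) (n : ℕ) :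
    erlangB (n + 1) a < erlangB n a := by
  have hfact : ∀ k : ℕ, (0:ℝ) < (Nat.factorial k : ℝ) := fun k =>
    Nat.cast_pos.mpr (Nat.factorial_pos k)
  have ht : ∀ k : ℕ, (0:ℝ) < a ^ k / (Nat.factorial k : ℝ) := fun k =>
    div_pos (pow_pos ha k) (hfact k)
  have hs : ∀ m : ℕ, 0 < s m a := fun m =>
    Finset.sum_pos (fun j _ => ht j) ⟨0, Finset.mem_range.mpr (Nat.succ_pos m)⟩
  unfold erlangB
  rw [div_lt_div_iff₀ (hs _) (hs _)]
  have key : ∀ j : ℕ, j ≤ n →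
      a ^ (n+1) / (Nat.factorial (n+1) : ℝ) * (a ^ j / (Nat.factorial j : ℝ)) ≤
      a ^ n / (Nat.factorial n : ℝ) * (a ^ (j+1) / (Nat.factorial (j+1) : ℝ)) := by
    intro j hj
    rw [div_mul_div_comm, div_mul_div_comm, ← pow_add, ← pow_add]
    have hexp : n + 1 + j = n + (j + 1) := by ring
    rw [hexp]
    have hden : (Nat.factorial n : ℝ) * (Nat.factorial (j+1) : ℝ) ≤
        (Nat.factorial (n+1) : ℝ) * (Nat.factorial j : ℝ) := by
      have : Nat.factorial n * Nat.factorial (j+1) ≤ Nat.factorial (n+1) * Nat.factorial j := by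
        rw [Nat.factorial_succ, Nat.factorial_succ]
        calc Nat.factorial n * ((j+1) * Nat.factorial j)
            ≤ Nat.factorial n * ((n+1) * Nat.factorial j) := by
              exact Nat.mul_le_mul_left _ (Nat.mul_le_mul_right _ (by omega))
          _ = (n+1) * Nat.factorial n * Nat.factorial j := by ring
      exact_mod_cast this
    gcongr
  calc a ^ (n+1) / (Nat.factorial (n+1) : ℝ) * s n a
      = ∑ j ∈ Finset.range (n+1),
          a ^ (n+1) / (Nat.factorial (n+1) : ℝ) * (a ^ j / (Nat.factorial j : ℝ)) := by
        rw [s, Finset.mul_sum]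
    _ ≤ ∑ j ∈ Finset.range (n+1),
          a ^ n / (Nat.factorial n : ℝ) * (a ^ (j+1) / (Nat.factorial (j+1) : ℝ)) :=
        Finset.sum_le_sum (fun j hj => key j (Nat.lt_succ_iff.mp (Finset.mem_range.mp hj)))
    _ < a ^ n / (Nat.factorial n : ℝ) * (a ^ 0 / (Nat.factorial 0 : ℝ)) +
        ∑ j ∈ Finset.range (n+1),
          a ^ n / (Nat.factorial n : ℝ) * (a ^ (j+1) / (Nat.factorial (j+1) : ℝ)) :=
        lt_add_of_pos_left _ (mul_pos (ht n) (ht 0))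
    _ = a ^ n / (Nat.factorial n : ℝ) * s (n+1) a := by
        rw [s, Finset.mul_sum,
          Finset.sum_range_succ' (fun j => a ^ n / (Nat.factorial n : ℝ) * (a ^ j / (Nat.factorial j : ℝ))) (n+1),
          add_comm]
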